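/- Let m, q ≥ 3 and p ≥ 1 be integers, let x be the Perron vector of B(m,p,q) (the unique positive unit eigenvector for the spectral radius), and let u_0 and v_0 denote the two vertices of degree 3, where u_0 lies on the cycle of length m and v_0 lies on the cycle of length q. If m > q then x_{u_0} < x_{v_0}, and if m = q then x_{u_0} = x_{v_0}. -/

import Mathlib

open SimpleGraph

/-- The spectral radius of a finite simple graph: the largest eigenvalue of its
adjacency matrix, i.e. the supremum of its (real) spectrum. -/
noncomputable def specRad {V : Type*} [Fintype V] (G : SimpleGraph V) : ℝ := by
  classical exact sSup (spectrum ℝ (G.adjMatrix ℝ))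

/-- The adjacency matrix of a finite simple graph over ℝ. -/
noncomputable def adjMat {V : Type*} [Fintype V] (G : SimpleGraph V) : Matrix V V ℝ := by
  classical exact G.adjMatrix ℝ

/-- The independence number of a graph: the maximum size of a set of pairwise
non-adjacent vertices. -/
noncomputable def indNum {V : Type*} [Fintype V] (G : SimpleGraph V) : ℕ :=
  sSup {k | ∃ s : Finset V, (∀ u ∈ s, ∀ v ∈ s, ¬ G.Adj u v) ∧ s.card = k}

/-- `BGraph m p q` is the graph `B(m,p,q)` obtained by attaching a cycle `C_m` and a
cycle `C_q` at the two end vertices of a path with `p` edges.  Its vertices are the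
`m` vertices `u_0, …, u_{m-1}` of the `m`-cycle, the `p-1` internal vertices
`w_1, …, w_{p-1}` of the path, and the `q` vertices `v_0, …, v_{q-1}` of the `q`-cycle;
the path joins `u_0` and `v_0`. -/
def BGraph (m p q : ℕ) : SimpleGraph (Fin m ⊕ Fin (p - 1) ⊕ Fin q) :=
  SimpleGraph.fromRel (fun a b =>
    match a, b with
    | Sum.inl i, Sum.inl j => (i.val + 1) % m = j.val
    | Sum.inr (Sum.inl i), Sum.inr (Sum.inl j) => i.val + 1 = j.val
    | Sum.inl i, Sum.inr (Sum.inl j) => i.val = 0 ∧ j.val = 0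
    | Sum.inr (Sum.inl i), Sum.inr (Sum.inr j) => i.val = p - 2 ∧ j.val = 0
    | Sum.inl i, Sum.inr (Sum.inr j) => p = 1 ∧ i.val = 0 ∧ j.val = 0
    | Sum.inr (Sum.inr i), Sum.inr (Sum.inr j) => (i.val + 1) % q = j.val
    | _, _ => False)

/-- `CGraph m q` is the graph `C(m,q)` obtained by identifying one vertex of a cycle
`C_m` with one vertex of a cycle `C_q`.  Its vertices are the `m` vertices of the
`m`-cycle together with the `q-1` remaining vertices of the `q`-cycle, which is
attached at the vertex `Sum.inl 0`. -/
def CGraph (m q : ℕ) : SimpleGraph (Fin m ⊕ Fin (q - 1)) :=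
  SimpleGraph.fromRel (fun a b =>
    match a, b with
    | Sum.inl i, Sum.inl j => (i.val + 1) % m = j.val
    | Sum.inr i, Sum.inr j => i.val + 1 = j.val
    | Sum.inl i, Sum.inr j => i.val = 0 ∧ (j.val = 0 ∨ j.val = q - 2)
    | _, _ => False)

/-- `PGraph m p q` is the graph `P(m,p,q)` obtained by identifying the two end
vertices of three internally disjoint paths with `m`, `p` and `q` edges respectively.
Its vertices are the two end vertices `u_0 = Sum.inl ()` and `v_0 = Sum.inr (Sum.inl ())`,
together with the internal vertices of the three paths. -/
def PGraph (m p q : ℕ) :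
    SimpleGraph (Unit ⊕ Unit ⊕ Fin (m - 1) ⊕ Fin (p - 1) ⊕ Fin (q - 1)) :=
  SimpleGraph.fromRel (fun a b =>
    match a, b with
    | Sum.inl _, Sum.inr (Sum.inl _) => m = 1 ∨ p = 1 ∨ q = 1
    | Sum.inl _, Sum.inr (Sum.inr (Sum.inl i)) => i.val = 0
    | Sum.inl _, Sum.inr (Sum.inr (Sum.inr (Sum.inl i))) => i.val = 0
    | Sum.inl _, Sum.inr (Sum.inr (Sum.inr (Sum.inr i))) => i.val = 0
    | Sum.inr (Sum.inl _), Sum.inr (Sum.inr (Sum.inl i)) => i.val = m - 2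
    | Sum.inr (Sum.inl _), Sum.inr (Sum.inr (Sum.inr (Sum.inl i))) => i.val = p - 2
    | Sum.inr (Sum.inl _), Sum.inr (Sum.inr (Sum.inr (Sum.inr i))) => i.val = q - 2
    | Sum.inr (Sum.inr (Sum.inl i)), Sum.inr (Sum.inr (Sum.inl j)) => i.val + 1 = j.val
    | Sum.inr (Sum.inr (Sum.inr (Sum.inl i))), Sum.inr (Sum.inr (Sum.inr (Sum.inl j))) =>
        i.val + 1 = j.val
    | Sum.inr (Sum.inr (Sum.inr (Sum.inr i))), Sum.inr (Sum.inr (Sum.inr (Sum.inr j))) =>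
        i.val + 1 = j.val
    | _, _ => False)

/-- `H` is contained in `G` as a subgraph, i.e. `G` has a subgraph isomorphic to `H`. -/
def containsCopy {W V : Type*} (H : SimpleGraph W) (G : SimpleGraph V) : Prop :=
  ∃ f : H →g G, Function.Injective f

/- ===== Auxiliary material for `perron_BGraph` ===== -/

open scoped Classical

section SumHelpers
variable {α : Type*} [Fintype α] [DecidableEq α]

lemma sum_ite_or₁ (f : α → ℝ) (P : α → Prop) [DecidablePred P] (a : α)
    (h : ∀ w, P w ↔ w = a) :
    ∑ w, (if P w then f w else 0) = f a := by
  have key : ∀ w, (if P w then f w else 0) = (if w = a then f w else 0) := by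
    intro w; by_cases hw : P w
    · rw [if_pos hw, if_pos ((h w).1 hw)]
    · rw [if_neg hw, if_neg (fun hc => hw ((h w).2 hc))]
  simp only [key]
  simp [Finset.sum_ite_eq']

lemma sum_ite_or₂ (f : α → ℝ) (P : α → Prop) [DecidablePred P] (a b : α) (hab : a ≠ b)
    (h : ∀ w, P w ↔ (w = a ∨ w = b)) :
    ∑ w, (if P w then f w else 0) = f a + f b := by
  have key : ∀ w, (if P w then f w else 0)
      = (if w = a then f w else 0) + (if w = b then f w else 0) := by
    intro w; by_cases hP : P w
    · rw [if_pos hP]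
      rcases (h w).1 hP with rfl | rfl
      · rw [if_pos rfl, if_neg hab]; ring
      · rw [if_pos rfl, if_neg (fun hc => hab hc.symm)]; ring
    · rw [if_neg hP, if_neg (fun hc => hP ((h w).2 (Or.inl hc))),
        if_neg (fun hc => hP ((h w).2 (Or.inr hc)))]; ring
  simp only [key]
  rw [Finset.sum_add_distrib]
  simp [Finset.sum_ite_eq']

lemma sum_ite_or₃ (f : α → ℝ) (P : α → Prop) [DecidablePred P] (a b c : α)
    (hab : a ≠ b) (hac : a ≠ c) (hbc : b ≠ c)
    (h : ∀ w, P w ↔ (w = a ∨ w = b ∨ w = c)) :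
    ∑ w, (if P w then f w else 0) = f a + f b + f c := by
  have key : ∀ w, (if P w then f w else 0)
      = (if w = a then f w else 0) + (if w = b then f w else 0)
        + (if w = c then f w else 0) := by
    intro w; by_cases hP : P w
    · rw [if_pos hP]
      rcases (h w).1 hP with rfl | rfl | rfl
      · rw [if_pos rfl, if_neg hab, if_neg hac]; ring
      · rw [if_pos rfl, if_neg (fun hc => hab hc.symm), if_neg hbc]; ring
      · rw [if_pos rfl, if_neg (fun hc => hac hc.symm), if_neg (fun hc => hbc hc.symm)]; ring
    · rw [if_neg hP, if_neg (fun hc => hP ((h w).2 (Or.inl hc))),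
        if_neg (fun hc => hP ((h w).2 (Or.inr (Or.inl hc)))),
        if_neg (fun hc => hP ((h w).2 (Or.inr (Or.inr hc))))]; ring
  simp only [key]
  rw [Finset.sum_add_distrib, Finset.sum_add_distrib]
  simp [Finset.sum_ite_eq']

end SumHelpers

section Seqs
variable {m p q : ℕ} (x : Fin m ⊕ Fin (p - 1) ⊕ Fin q → ℝ)

/-- values of `x` along the `m`-cycle, as a periodic sequence. -/
def aseq (i : ℕ) : ℝ := if h : i % m < m then x (Sum.inl ⟨i % m, h⟩) else 0

/-- values of `x` along the `q`-cycle, as a periodic sequence. -/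
def bseq (j : ℕ) : ℝ := if h : j % q < q then x (Sum.inr (Sum.inr ⟨j % q, h⟩)) else 0

/-- values of `x` along the path from `u₀` to `v₀` (constant `bseq x 0` past `p`). -/
def yseq (k : ℕ) : ℝ :=
  if k = 0 then aseq x 0
  else if h : k - 1 < p - 1 then x (Sum.inr (Sum.inl ⟨k - 1, h⟩)) else bseq x 0

end Seqs

lemma cyc_helper {m i j : ℕ} (hm : 3 ≤ m) (hi0 : 0 < i) (him : i < m) (hj : j < m) :
    (i ≠ j ∧ ((i + 1) % m = j ∨ (j + 1) % m = i)) ↔ (j = (i + 1) % m ∨ j = i - 1) := by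
  rcases Nat.lt_or_ge (i + 1) m with h1 | h1
  · rw [Nat.mod_eq_of_lt h1]
    rcases Nat.lt_or_ge (j + 1) m with h2 | h2
    · rw [Nat.mod_eq_of_lt h2]; omega
    · rw [show j + 1 = m by omega, Nat.mod_self]; omega
  · rw [show i + 1 = m by omega, Nat.mod_self]
    rcases Nat.lt_or_ge (j + 1) m with h2 | h2
    · rw [Nat.mod_eq_of_lt h2]; omega
    · rw [show j + 1 = m by omega, Nat.mod_self]; omega

lemma cyc_helper0 {m j : ℕ} (hm : 3 ≤ m) (hj : j < m) :
    (0 ≠ j ∧ ((0 + 1) % m = j ∨ (j + 1) % m = 0)) ↔ (j = 1 ∨ j = m - 1) := by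
  rw [Nat.mod_eq_of_lt (show 0 + 1 < m by omega)]
  rcases Nat.lt_or_ge (j + 1) m with h2 | h2
  · rw [Nat.mod_eq_of_lt h2]; omega
  · rw [show j + 1 = m by omega, Nat.mod_self]; omega

section Feqs
variable {m p q : ℕ} {x : Fin m ⊕ Fin (p - 1) ⊕ Fin q → ℝ} {ρ : ℝ}

/-- Eigen-equation at an interior vertex of the `m`-cycle. -/
lemma F1 (hm : 3 ≤ m)
    (hx : ∀ v, (∑ w, if (BGraph m p q).Adj v w then x w else 0) = ρ * x v) :
    ∀ i, 0 < i → i < m → ρ * aseq x i = aseq x (i - 1) + aseq x (i + 1) := by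
  intro i hi0 him
  have h := hx (Sum.inl ⟨i, him⟩)
  rw [Fintype.sum_sum_type, Fintype.sum_sum_type] at h
  have h1 : (∑ j : Fin m, if (BGraph m p q).Adj (Sum.inl ⟨i, him⟩) (Sum.inl j)
        then x (Sum.inl j) else 0)
      = x (Sum.inl ⟨(i + 1) % m, Nat.mod_lt _ (by omega)⟩)
        + x (Sum.inl ⟨i - 1, by omega⟩) := by
    apply sum_ite_or₂ (f := fun j : Fin m => x (Sum.inl j))
    · intro hc
      rw [Fin.mk.injEq] at hc
      rcases Nat.lt_or_ge (i + 1) m with h' | h'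
      · rw [Nat.mod_eq_of_lt h'] at hc; omega
      · rw [show i + 1 = m by omega, Nat.mod_self] at hc; omega
    · intro w
      simp only [BGraph, SimpleGraph.fromRel_adj, Sum.inl.injEq, Fin.ext_iff, ne_eq]
      exact (cyc_helper hm hi0 him w.isLt).trans (by simp [Fin.ext_iff])
  have h2 : (∑ k : Fin (p - 1), if (BGraph m p q).Adj (Sum.inl ⟨i, him⟩) (Sum.inr (Sum.inl k))
        then x (Sum.inr (Sum.inl k)) else 0) = 0 := by
    apply Finset.sum_eq_zero
    intro k _
    rw [if_neg]
    simp only [BGraph, SimpleGraph.fromRel_adj]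
    rintro ⟨-, h | h⟩ <;> simp_all <;> omega
  have h3 : (∑ j : Fin q, if (BGraph m p q).Adj (Sum.inl ⟨i, him⟩) (Sum.inr (Sum.inr j))
        then x (Sum.inr (Sum.inr j)) else 0) = 0 := by
    apply Finset.sum_eq_zero
    intro j _
    rw [if_neg]
    simp only [BGraph, SimpleGraph.fromRel_adj]
    rintro ⟨-, h | h⟩ <;> simp_all <;> omega
  rw [h1, h2, h3] at h
  have e1 : aseq x i = x (Sum.inl ⟨i, him⟩) := by
    simp [aseq, Nat.mod_eq_of_lt him, him]
  have e2 : aseq x (i - 1) = x (Sum.inl ⟨i - 1, by omega⟩) := by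
    simp [aseq, Nat.mod_eq_of_lt (show i - 1 < m by omega), show i - 1 < m by omega]
  have e3 : aseq x (i + 1) = x (Sum.inl ⟨(i + 1) % m, Nat.mod_lt _ (by omega)⟩) := by
    simp [aseq, Nat.mod_lt _ (show 0 < m by omega)]
  rw [e1, e2, e3]
  linarith [h]

/-- Eigen-equation at an interior vertex of the `q`-cycle. -/
lemma F3 (hq : 3 ≤ q)
    (hx : ∀ v, (∑ w, if (BGraph m p q).Adj v w then x w else 0) = ρ * x v) :
    ∀ j, 0 < j → j < q → ρ * bseq x j = bseq x (j - 1) + bseq x (j + 1) := by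
  intro i hi0 him
  have h := hx (Sum.inr (Sum.inr ⟨i, him⟩))
  rw [Fintype.sum_sum_type, Fintype.sum_sum_type] at h
  have h1 : (∑ j : Fin q, if (BGraph m p q).Adj (Sum.inr (Sum.inr ⟨i, him⟩)) (Sum.inr (Sum.inr j))
        then x (Sum.inr (Sum.inr j)) else 0)
      = x (Sum.inr (Sum.inr ⟨(i + 1) % q, Nat.mod_lt _ (by omega)⟩))
        + x (Sum.inr (Sum.inr ⟨i - 1, by omega⟩)) := by
    apply sum_ite_or₂ (f := fun j : Fin q => x (Sum.inr (Sum.inr j)))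
    · intro hc
      rw [Fin.mk.injEq] at hc
      rcases Nat.lt_or_ge (i + 1) q with h' | h'
      · rw [Nat.mod_eq_of_lt h'] at hc; omega
      · rw [show i + 1 = q by omega, Nat.mod_self] at hc; omega
    · intro w
      simp only [BGraph, SimpleGraph.fromRel_adj, Sum.inr.injEq, Sum.inl.injEq,
        Fin.ext_iff, ne_eq]
      exact (cyc_helper hq hi0 him w.isLt).trans (by simp [Fin.ext_iff])
  have h2 : (∑ j : Fin m, if (BGraph m p q).Adj (Sum.inr (Sum.inr ⟨i, him⟩)) (Sum.inl j)
        then x (Sum.inl j) else 0) = 0 := by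
    apply Finset.sum_eq_zero
    intro j _
    rw [if_neg]
    simp only [BGraph, SimpleGraph.fromRel_adj]
    rintro ⟨-, h | h⟩ <;> simp_all <;> omega
  have h3 : (∑ k : Fin (p - 1), if (BGraph m p q).Adj (Sum.inr (Sum.inr ⟨i, him⟩))
        (Sum.inr (Sum.inl k)) then x (Sum.inr (Sum.inl k)) else 0) = 0 := by
    apply Finset.sum_eq_zero
    intro k _
    rw [if_neg]
    simp only [BGraph, SimpleGraph.fromRel_adj]
    rintro ⟨-, h | h⟩ <;> simp_all <;> omega
  rw [h1, h2, h3] at h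
  have e1 : bseq x i = x (Sum.inr (Sum.inr ⟨i, him⟩)) := by
    simp [bseq, Nat.mod_eq_of_lt him, him]
  have e2 : bseq x (i - 1) = x (Sum.inr (Sum.inr ⟨i - 1, by omega⟩)) := by
    simp [bseq, Nat.mod_eq_of_lt (show i - 1 < q by omega), show i - 1 < q by omega]
  have e3 : bseq x (i + 1) = x (Sum.inr (Sum.inr ⟨(i + 1) % q, Nat.mod_lt _ (by omega)⟩)) := by
    simp [bseq, Nat.mod_lt _ (show 0 < q by omega)]
  rw [e1, e2, e3]
  linarith [h]

end Feqs

section Feqs2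
variable {m p q : ℕ} {x : Fin m ⊕ Fin (p - 1) ⊕ Fin q → ℝ} {ρ : ℝ}

/-- Eigen-equation at `u₀`. -/
lemma F2 (hm : 3 ≤ m) (hq : 3 ≤ q) (hp : 1 ≤ p)
    (hx : ∀ v, (∑ w, if (BGraph m p q).Adj v w then x w else 0) = ρ * x v) :
    ρ * aseq x 0 = aseq x 1 + aseq x (m - 1) + yseq x 1 := by
  have h0m : (0:ℕ) < m := by omega
  have h := hx (Sum.inl ⟨0, h0m⟩)
  rw [Fintype.sum_sum_type, Fintype.sum_sum_type] at h
  have h1 : (∑ j : Fin m, if (BGraph m p q).Adj (Sum.inl ⟨0, h0m⟩) (Sum.inl j)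
        then x (Sum.inl j) else 0)
      = x (Sum.inl ⟨1, by omega⟩) + x (Sum.inl ⟨m - 1, by omega⟩) := by
    apply sum_ite_or₂ (f := fun j : Fin m => x (Sum.inl j))
    · intro hc; rw [Fin.mk.injEq] at hc; omega
    · intro w
      simp only [BGraph, SimpleGraph.fromRel_adj, Sum.inl.injEq, Fin.ext_iff, ne_eq]
      exact (cyc_helper0 hm w.isLt).trans (by simp [Fin.ext_iff])
  have e1 : aseq x 0 = x (Sum.inl ⟨0, h0m⟩) := by
    simp [aseq, Nat.mod_eq_of_lt h0m, h0m]
  have e2 : aseq x 1 = x (Sum.inl ⟨1, by omega⟩) := by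
    simp [aseq, Nat.mod_eq_of_lt (show 1 < m by omega), show 1 < m by omega]
  have e3 : aseq x (m - 1) = x (Sum.inl ⟨m - 1, by omega⟩) := by
    simp [aseq, Nat.mod_eq_of_lt (show m - 1 < m by omega), show m - 1 < m by omega]
  rcases Nat.lt_or_ge p 2 with hp2 | hp2
  · -- p = 1
    have hp1 : p = 1 := by omega
    have h2 : (∑ k : Fin (p - 1), if (BGraph m p q).Adj (Sum.inl ⟨0, h0m⟩) (Sum.inr (Sum.inl k))
          then x (Sum.inr (Sum.inl k)) else 0) = 0 := by
      apply Finset.sum_eq_zero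
      intro k _
      exact absurd k.isLt (by omega)
    have h3 : (∑ j : Fin q, if (BGraph m p q).Adj (Sum.inl ⟨0, h0m⟩) (Sum.inr (Sum.inr j))
          then x (Sum.inr (Sum.inr j)) else 0) = x (Sum.inr (Sum.inr ⟨0, by omega⟩)) := by
      apply sum_ite_or₁ (f := fun j : Fin q => x (Sum.inr (Sum.inr j)))
      intro w
      simp only [BGraph, SimpleGraph.fromRel_adj, Sum.inr.injEq, Fin.ext_iff, ne_eq]
      constructor
      · rintro ⟨-, h | h⟩ <;> simp_all
      · rintro h; exact ⟨by simp, Or.inl ⟨hp1, trivial, by simp_all⟩⟩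
    have e4 : yseq x 1 = x (Sum.inr (Sum.inr ⟨0, by omega⟩)) := by
      simp [yseq, hp1, bseq, Nat.mod_eq_of_lt (show 0 < q by omega), show 0 < q by omega]
    rw [h1, h2, h3] at h
    rw [e1, e2, e3, e4]
    linarith [h]
  · -- p ≥ 2
    have h2 : (∑ k : Fin (p - 1), if (BGraph m p q).Adj (Sum.inl ⟨0, h0m⟩) (Sum.inr (Sum.inl k))
          then x (Sum.inr (Sum.inl k)) else 0) = x (Sum.inr (Sum.inl ⟨0, by omega⟩)) := by
      apply sum_ite_or₁ (f := fun k : Fin (p-1) => x (Sum.inr (Sum.inl k)))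
      intro w
      simp only [BGraph, SimpleGraph.fromRel_adj, Sum.inr.injEq, Sum.inl.injEq,
        Fin.ext_iff, ne_eq]
      constructor
      · rintro ⟨-, h | h⟩ <;> simp_all
      · rintro h; exact ⟨by simp, Or.inl ⟨trivial, by simp_all⟩⟩
    have h3 : (∑ j : Fin q, if (BGraph m p q).Adj (Sum.inl ⟨0, h0m⟩) (Sum.inr (Sum.inr j))
          then x (Sum.inr (Sum.inr j)) else 0) = 0 := by
      apply Finset.sum_eq_zero
      intro j _
      rw [if_neg]
      simp only [BGraph, SimpleGraph.fromRel_adj]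
      rintro ⟨-, h | h⟩ <;> simp_all <;> omega
    have e4 : yseq x 1 = x (Sum.inr (Sum.inl ⟨0, by omega⟩)) := by
      simp [yseq, show (0:ℕ) < p - 1 by omega]
    rw [h1, h2, h3] at h
    rw [e1, e2, e3, e4]
    linarith [h]

/-- Eigen-equation at `v₀`. -/
lemma F4 (hm : 3 ≤ m) (hq : 3 ≤ q) (hp : 1 ≤ p)
    (hx : ∀ v, (∑ w, if (BGraph m p q).Adj v w then x w else 0) = ρ * x v) :
    ρ * bseq x 0 = bseq x 1 + bseq x (q - 1) + yseq x (p - 1) := by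
  have h0q : (0:ℕ) < q := by omega
  have h := hx (Sum.inr (Sum.inr ⟨0, h0q⟩))
  rw [Fintype.sum_sum_type, Fintype.sum_sum_type] at h
  have h1 : (∑ j : Fin q, if (BGraph m p q).Adj (Sum.inr (Sum.inr ⟨0, h0q⟩)) (Sum.inr (Sum.inr j))
        then x (Sum.inr (Sum.inr j)) else 0)
      = x (Sum.inr (Sum.inr ⟨1, by omega⟩)) + x (Sum.inr (Sum.inr ⟨q - 1, by omega⟩)) := by
    apply sum_ite_or₂ (f := fun j : Fin q => x (Sum.inr (Sum.inr j)))
    · intro hc; rw [Fin.mk.injEq] at hc; omega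
    · intro w
      simp only [BGraph, SimpleGraph.fromRel_adj, Sum.inr.injEq, Fin.ext_iff, ne_eq]
      exact (cyc_helper0 hq w.isLt).trans (by simp [Fin.ext_iff])
  have e1 : bseq x 0 = x (Sum.inr (Sum.inr ⟨0, h0q⟩)) := by
    simp [bseq, Nat.mod_eq_of_lt h0q, h0q]
  have e2 : bseq x 1 = x (Sum.inr (Sum.inr ⟨1, by omega⟩)) := by
    simp [bseq, Nat.mod_eq_of_lt (show 1 < q by omega), show 1 < q by omega]
  have e3 : bseq x (q - 1) = x (Sum.inr (Sum.inr ⟨q - 1, by omega⟩)) := by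
    simp [bseq, Nat.mod_eq_of_lt (show q - 1 < q by omega), show q - 1 < q by omega]
  rcases Nat.lt_or_ge p 2 with hp2 | hp2
  · -- p = 1 : the path neighbour of v₀ is u₀
    have hp1 : p = 1 := by omega
    have h2 : (∑ j : Fin m, if (BGraph m p q).Adj (Sum.inr (Sum.inr ⟨0, h0q⟩)) (Sum.inl j)
          then x (Sum.inl j) else 0) = x (Sum.inl ⟨0, by omega⟩) := by
      apply sum_ite_or₁ (f := fun j : Fin m => x (Sum.inl j))
      intro w
      simp only [BGraph, SimpleGraph.fromRel_adj, Sum.inl.injEq, Fin.ext_iff, ne_eq]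
      constructor
      · rintro ⟨-, h | h⟩ <;> simp_all
      · rintro h; exact ⟨by simp, Or.inr ⟨hp1, by simp_all, trivial⟩⟩
    have h3 : (∑ k : Fin (p - 1), if (BGraph m p q).Adj (Sum.inr (Sum.inr ⟨0, h0q⟩))
          (Sum.inr (Sum.inl k)) then x (Sum.inr (Sum.inl k)) else 0) = 0 := by
      apply Finset.sum_eq_zero
      intro k _
      exact absurd k.isLt (by omega)
    have e4 : yseq x (p - 1) = x (Sum.inl ⟨0, by omega⟩) := by
      simp [yseq, hp1, aseq, Nat.mod_eq_of_lt (show 0 < m by omega), show 0 < m by omega]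
    rw [h1, h2, h3] at h
    rw [e1, e2, e3, e4]
    linarith [h]
  · -- p ≥ 2 : the path neighbour of v₀ is w_{p-1}
    have h2 : (∑ j : Fin m, if (BGraph m p q).Adj (Sum.inr (Sum.inr ⟨0, h0q⟩)) (Sum.inl j)
          then x (Sum.inl j) else 0) = 0 := by
      apply Finset.sum_eq_zero
      intro j _
      rw [if_neg]
      simp only [BGraph, SimpleGraph.fromRel_adj]
      rintro ⟨-, h | h⟩ <;> simp_all <;> omega
    have h3 : (∑ k : Fin (p - 1), if (BGraph m p q).Adj (Sum.inr (Sum.inr ⟨0, h0q⟩))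
          (Sum.inr (Sum.inl k)) then x (Sum.inr (Sum.inl k)) else 0)
        = x (Sum.inr (Sum.inl ⟨p - 2, by omega⟩)) := by
      apply sum_ite_or₁ (f := fun k : Fin (p-1) => x (Sum.inr (Sum.inl k)))
      intro w
      simp only [BGraph, SimpleGraph.fromRel_adj, Sum.inr.injEq, Sum.inl.injEq,
        Fin.ext_iff, ne_eq]
      constructor
      · rintro ⟨-, h | h⟩ <;> simp_all
      · rintro h; exact ⟨by simp, Or.inr ⟨by simp_all, trivial⟩⟩
    have e4 : yseq x (p - 1) = x (Sum.inr (Sum.inl ⟨p - 2, by omega⟩)) := by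
      have : p - 1 ≠ 0 := by omega
      have h' : p - 1 - 1 < p - 1 := by omega
      simp only [yseq, if_neg this, dif_pos h']
      simp [show p - 1 - 1 = p - 2 from by omega]
    rw [h1, h2, h3] at h
    rw [e1, e2, e3, e4]
    linarith [h]

end Feqs2

section Feqs3
variable {m p q : ℕ} {x : Fin m ⊕ Fin (p - 1) ⊕ Fin q → ℝ} {ρ : ℝ}

/-- Eigen-equation at an interior vertex of the path. -/
lemma F5 (hm : 3 ≤ m) (hq : 3 ≤ q)
    (hx : ∀ v, (∑ w, if (BGraph m p q).Adj v w then x w else 0) = ρ * x v) :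
    ∀ k, 0 < k → k < p → ρ * yseq x k = yseq x (k - 1) + yseq x (k + 1) := by
  intro k hk0 hkp
  have hk1 : k - 1 < p - 1 := by omega
  have h := hx (Sum.inr (Sum.inl ⟨k - 1, hk1⟩))
  rw [Fintype.sum_sum_type, Fintype.sum_sum_type] at h
  have ek : yseq x k = x (Sum.inr (Sum.inl ⟨k - 1, hk1⟩)) := by
    simp [yseq, hk0.ne', hk1]
  -- the three component sums, by cases on the position of k
  rcases Nat.lt_or_ge 1 k with hk2 | hk2
  · -- k ≥ 2 : left neighbour is w_{k-1}, i.e. index k-2 in Fin (p-1)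
    have h1 : (∑ j : Fin m, if (BGraph m p q).Adj (Sum.inr (Sum.inl ⟨k - 1, hk1⟩)) (Sum.inl j)
          then x (Sum.inl j) else 0) = 0 := by
      apply Finset.sum_eq_zero
      intro j _
      clear hx h
      rw [if_neg]
      simp only [BGraph, SimpleGraph.fromRel_adj]
      rintro ⟨-, h | h⟩ <;> simp_all <;> omega
    have ekm : yseq x (k - 1) = x (Sum.inr (Sum.inl ⟨k - 2, by omega⟩)) := by
      have h0 : k - 1 ≠ 0 := by omega
      have h' : k - 1 - 1 < p - 1 := by omega
      simp only [yseq, if_neg h0, dif_pos h']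
      simp [show k - 1 - 1 = k - 2 from by omega]
    rcases Nat.lt_or_ge (k + 1) p with hk3 | hk3
    · -- k < p - 1 : right neighbour is w_{k+1}, index k in Fin (p-1)
      have h2 : (∑ kk : Fin (p - 1), if (BGraph m p q).Adj (Sum.inr (Sum.inl ⟨k - 1, hk1⟩))
            (Sum.inr (Sum.inl kk)) then x (Sum.inr (Sum.inl kk)) else 0)
          = x (Sum.inr (Sum.inl ⟨k, by omega⟩)) + x (Sum.inr (Sum.inl ⟨k - 2, by omega⟩)) := by
        apply sum_ite_or₂ (f := fun kk : Fin (p-1) => x (Sum.inr (Sum.inl kk)))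
        · intro hc; rw [Fin.mk.injEq] at hc; omega
        · intro w
          simp only [BGraph, SimpleGraph.fromRel_adj, Sum.inr.injEq, Sum.inl.injEq,
            Fin.ext_iff, ne_eq]
          constructor
          · rintro ⟨hne, h | h⟩ <;> omega
          · rintro (h | h) <;> exact ⟨by omega, by omega⟩
      have h3 : (∑ j : Fin q, if (BGraph m p q).Adj (Sum.inr (Sum.inl ⟨k - 1, hk1⟩))
            (Sum.inr (Sum.inr j)) then x (Sum.inr (Sum.inr j)) else 0) = 0 := by
        apply Finset.sum_eq_zero
        intro j _
        clear hx h
        rw [if_neg]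
        simp only [BGraph, SimpleGraph.fromRel_adj]
        rintro ⟨-, h | h⟩ <;> simp_all <;> omega
      have ekp : yseq x (k + 1) = x (Sum.inr (Sum.inl ⟨k, by omega⟩)) := by
        have h' : k + 1 - 1 < p - 1 := by omega
        simp only [yseq, if_neg (by omega : ¬(k+1 = 0)), dif_pos h']
        simp
      rw [h1, h2, h3] at h
      rw [ek, ekm, ekp]
      linarith [h]
    · -- k = p - 1 : right neighbour is v₀
      have h2 : (∑ kk : Fin (p - 1), if (BGraph m p q).Adj (Sum.inr (Sum.inl ⟨k - 1, hk1⟩))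
            (Sum.inr (Sum.inl kk)) then x (Sum.inr (Sum.inl kk)) else 0)
          = x (Sum.inr (Sum.inl ⟨k - 2, by omega⟩)) := by
        apply sum_ite_or₁ (f := fun kk : Fin (p-1) => x (Sum.inr (Sum.inl kk)))
        intro w
        clear hx h
        simp only [BGraph, SimpleGraph.fromRel_adj, Sum.inr.injEq, Sum.inl.injEq,
          Fin.ext_iff, ne_eq]
        constructor
        · rintro ⟨hne, h | h⟩ <;> omega
        · rintro h; exact ⟨by omega, by omega⟩
      have h3 : (∑ j : Fin q, if (BGraph m p q).Adj (Sum.inr (Sum.inl ⟨k - 1, hk1⟩))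
            (Sum.inr (Sum.inr j)) then x (Sum.inr (Sum.inr j)) else 0)
          = x (Sum.inr (Sum.inr ⟨0, by omega⟩)) := by
        apply sum_ite_or₁ (f := fun j : Fin q => x (Sum.inr (Sum.inr j)))
        intro w
        clear hx h
        simp only [BGraph, SimpleGraph.fromRel_adj, Sum.inr.injEq, Fin.ext_iff, ne_eq]
        constructor
        · rintro ⟨-, h | h⟩
          · exact h.2
          · exact h.elim
        · rintro h; exact ⟨by simp, Or.inl ⟨by omega, h⟩⟩
      have ekp : yseq x (k + 1) = x (Sum.inr (Sum.inr ⟨0, by omega⟩)) := by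
        have h' : ¬ (k + 1 - 1 < p - 1) := by omega
        simp only [yseq, if_neg (by omega : ¬(k+1 = 0)), dif_neg h']
        simp [bseq, Nat.mod_eq_of_lt (show 0 < q by omega), show 0 < q by omega]
      rw [h1, h2, h3] at h
      rw [ek, ekm, ekp]
      linarith [h]
  · -- k = 1 : left neighbour is u₀
    have hk1' : k = 1 := by omega
    subst hk1'
    have h1 : (∑ j : Fin m, if (BGraph m p q).Adj (Sum.inr (Sum.inl ⟨0, hk1⟩)) (Sum.inl j)
          then x (Sum.inl j) else 0) = x (Sum.inl ⟨0, by omega⟩) := by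
      apply sum_ite_or₁ (f := fun j : Fin m => x (Sum.inl j))
      intro w
      clear hx h
      simp only [BGraph, SimpleGraph.fromRel_adj, Sum.inl.injEq, Fin.ext_iff, ne_eq]
      constructor
      · rintro ⟨-, h | h⟩ <;> simp_all
      · rintro h; exact ⟨by simp, Or.inr ⟨by simp_all, trivial⟩⟩
    have ekm : yseq x 0 = x (Sum.inl ⟨0, by omega⟩) := by
      simp [yseq, aseq, Nat.mod_eq_of_lt (show 0 < m by omega), show 0 < m by omega]
    rcases Nat.lt_or_ge 2 p with hk3 | hk3
    · -- p ≥ 3 : right neighbour is w₂, index 1 in Fin (p-1)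
      have h2 : (∑ kk : Fin (p - 1), if (BGraph m p q).Adj (Sum.inr (Sum.inl ⟨0, hk1⟩))
            (Sum.inr (Sum.inl kk)) then x (Sum.inr (Sum.inl kk)) else 0)
          = x (Sum.inr (Sum.inl ⟨1, by omega⟩)) := by
        apply sum_ite_or₁ (f := fun kk : Fin (p-1) => x (Sum.inr (Sum.inl kk)))
        intro w
        clear hx h
        simp only [BGraph, SimpleGraph.fromRel_adj, Sum.inr.injEq, Sum.inl.injEq,
          Fin.ext_iff, ne_eq]
        constructor
        · rintro ⟨hne, h | h⟩ <;> omega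
        · rintro h; exact ⟨by omega, by omega⟩
      have h3 : (∑ j : Fin q, if (BGraph m p q).Adj (Sum.inr (Sum.inl ⟨0, hk1⟩))
            (Sum.inr (Sum.inr j)) then x (Sum.inr (Sum.inr j)) else 0) = 0 := by
        apply Finset.sum_eq_zero
        intro j _
        clear hx h
        rw [if_neg]
        simp only [BGraph, SimpleGraph.fromRel_adj]
        rintro ⟨-, h | h⟩ <;> simp_all <;> omega
      have ekp : yseq x 2 = x (Sum.inr (Sum.inl ⟨1, by omega⟩)) := by
        have h' : 2 - 1 < p - 1 := by omega
        simp only [yseq, if_neg (by omega : ¬((2:ℕ) = 0)), dif_pos h']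
      rw [h1, h2, h3] at h
      rw [ek, ekm, ekp]
      linarith [h]
    · -- p = 2 : right neighbour is v₀
      have hp2 : p = 2 := by omega
      have h2 : (∑ kk : Fin (p - 1), if (BGraph m p q).Adj (Sum.inr (Sum.inl ⟨0, hk1⟩))
            (Sum.inr (Sum.inl kk)) then x (Sum.inr (Sum.inl kk)) else 0) = 0 := by
        apply Finset.sum_eq_zero
        intro kk _
        clear hx h
        rw [if_neg]
        simp only [BGraph, SimpleGraph.fromRel_adj]
        have := kk.isLt
        rintro ⟨hne, h | h⟩ <;> simp_all [Fin.ext_iff] <;> omega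
      have h3 : (∑ j : Fin q, if (BGraph m p q).Adj (Sum.inr (Sum.inl ⟨0, hk1⟩))
            (Sum.inr (Sum.inr j)) then x (Sum.inr (Sum.inr j)) else 0)
          = x (Sum.inr (Sum.inr ⟨0, by omega⟩)) := by
        apply sum_ite_or₁ (f := fun j : Fin q => x (Sum.inr (Sum.inr j)))
        intro w
        clear hx h
        simp only [BGraph, SimpleGraph.fromRel_adj, Sum.inr.injEq, Fin.ext_iff, ne_eq]
        constructor
        · rintro ⟨-, h | h⟩
          · exact h.2
          · exact h.elim
        · rintro h; exact ⟨by simp, Or.inl ⟨by omega, h⟩⟩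
      have ekp : yseq x 2 = x (Sum.inr (Sum.inr ⟨0, by omega⟩)) := by
        have h' : ¬ (2 - 1 < p - 1) := by omega
        simp only [yseq, if_neg (by omega : ¬((2:ℕ) = 0)), dif_neg h']
        simp [bseq, Nat.mod_eq_of_lt (show 0 < q by omega), show 0 < q by omega]
      rw [h1, h2, h3] at h
      rw [ek, ekm, ekp]
      linarith [h]

end Feqs3

lemma sum_shift (f : ℕ → ℝ) (n : ℕ) :
    ∑ i ∈ Finset.range n, f (i + 1) = (∑ i ∈ Finset.range n, f i) - f 0 + f n := by
  induction n with
  | zero => simp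
  | succ n ih => rw [Finset.sum_range_succ, Finset.sum_range_succ, ih]; ring

section Pos
variable {m p q : ℕ} {x : Fin m ⊕ Fin (p - 1) ⊕ Fin q → ℝ} {ρ : ℝ}

lemma apos (hm : 3 ≤ m) (hpos : ∀ v, 0 < x v) : ∀ i, 0 < aseq x i := by
  intro i
  have h : i % m < m := Nat.mod_lt _ (by omega)
  rw [show aseq x i = x (Sum.inl ⟨i % m, h⟩) from dif_pos h]
  exact hpos _

lemma bpos (hq : 3 ≤ q) (hpos : ∀ v, 0 < x v) : ∀ j, 0 < bseq x j := by
  intro j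
  have h : j % q < q := Nat.mod_lt _ (by omega)
  rw [show bseq x j = x (Sum.inr (Sum.inr ⟨j % q, h⟩)) from dif_pos h]
  exact hpos _

lemma ypos (hm : 3 ≤ m) (hq : 3 ≤ q) (hpos : ∀ v, 0 < x v) : ∀ k, 0 < yseq x k := by
  intro k
  unfold yseq
  split_ifs with h1 h2
  · exact apos hm hpos 0
  · exact hpos _
  · exact bpos hq hpos 0

/-- The eigenvalue is larger than `2`. -/
lemma rho_gt_two (hm : 3 ≤ m) (hq : 3 ≤ q) (hp : 1 ≤ p) (hpos : ∀ v, 0 < x v)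
    (hx : ∀ v, (∑ w, if (BGraph m p q).Adj v w then x w else 0) = ρ * x v) :
    2 < ρ := by
  obtain ⟨m1, rfl⟩ : ∃ m1, m = m1 + 1 := ⟨m - 1, by omega⟩
  set T : ℝ := ∑ i ∈ Finset.range (m1 + 1), aseq x i with hT
  have hTpos : 0 < T := by
    apply Finset.sum_pos (fun i _ => apos hm hpos i)
    exact ⟨0, Finset.mem_range.2 (by omega)⟩
  have h1 : ρ * T = ∑ i ∈ Finset.range (m1 + 1), ρ * aseq x i := by
    rw [Finset.mul_sum]
  rw [Finset.sum_range_succ'] at h1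
  have h2 : ∀ i ∈ Finset.range m1, ρ * aseq x (i + 1) = aseq x i + aseq x (i + 2) := by
    intro i hi
    rw [Finset.mem_range] at hi
    have := F1 hm hx (i + 1) (by omega) (by omega)
    simpa using this
  rw [Finset.sum_congr rfl h2, Finset.sum_add_distrib] at h1
  have hs2 : ∑ i ∈ Finset.range m1, aseq x (i + 2) =
      (∑ i ∈ Finset.range m1, aseq x (i + 1)) - aseq x 1 + aseq x (m1 + 1) :=
    sum_shift (fun i => aseq x (i + 1)) m1
  have hs1 : ∑ i ∈ Finset.range m1, aseq x (i + 1) =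
      (∑ i ∈ Finset.range m1, aseq x i) - aseq x 0 + aseq x m1 := sum_shift (aseq x) m1
  have hs0 : (∑ i ∈ Finset.range m1, aseq x i) = T - aseq x m1 := by
    rw [hT, Finset.sum_range_succ]; ring
  have haM : aseq x (m1 + 1) = aseq x 0 := by
    simp [aseq, Nat.mod_self, Nat.zero_mod]
  have hF2 : ρ * aseq x 0 = aseq x 1 + aseq x m1 + yseq x 1 := by
    have := F2 hm hq hp hx
    simpa using this
  have hy1 : 0 < yseq x 1 := ypos hm hq hpos 1
  nlinarith [h1, hs2, hs1, hs0, haM, hF2]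

end Pos

/-- Two solutions of the three–term recurrence agreeing at `0` and `1` agree up to `n`. -/
lemma rec_unique (ρ : ℝ) (n : ℕ) (f g : ℕ → ℝ)
    (hf : ∀ i, 0 < i → i < n → ρ * f i = f (i - 1) + f (i + 1))
    (hg : ∀ i, 0 < i → i < n → ρ * g i = g (i - 1) + g (i + 1))
    (h0 : f 0 = g 0) (h1 : f 1 = g 1) : ∀ i, i ≤ n → f i = g i := by
  intro i
  induction i using Nat.strong_induction_on with
  | _ i ih =>
    intro hin
    match i with
    | 0 => exact h0
    | 1 => exact h1
    | (j + 2) =>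
      have e1 := hf (j + 1) (by omega) (by omega)
      have e2 := hg (j + 1) (by omega) (by omega)
      simp only [Nat.add_sub_cancel] at e1 e2
      have i1 := ih (j + 1) (by omega) (by omega)
      have i2 := ih j (by omega) (by omega)
      rw [i1, i2] at e1
      have : f (j + 1 + 1) = g (j + 1 + 1) := by linarith
      simpa using this

/-- Closed form for a positive solution of the recurrence on a cycle segment with equal
endpoints. -/
lemma segment_form (ρ lam : ℝ) (hlam : 1 < lam) (hρ : ρ = lam + lam⁻¹)
    (n : ℕ) (hn : 1 ≤ n) (f : ℕ → ℝ)
    (hrec : ∀ i, 0 < i → i < n → ρ * f i = f (i - 1) + f (i + 1)) (hend : f n = f 0) :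
    ∀ i, i ≤ n → f i * (1 + lam ^ n) = f 0 * (lam ^ i + lam ^ (n - i)) := by
  have hlam0 : (0:ℝ) < lam := by linarith
  have hlamne : lam ≠ 0 := ne_of_gt hlam0
  have hinvlt : lam⁻¹ < 1 := by
    rw [inv_lt_one_iff₀]; right; exact hlam
  have hinv0 : 0 < lam⁻¹ := by positivity
  have hsubpos : 0 < lam - lam⁻¹ := by linarith
  set D : ℝ := (f 1 * (1 + lam ^ n) - f 0 * (lam + lam ^ (n - 1))) / (lam - lam⁻¹) with hD
  set F : ℕ → ℝ := fun i => f i * (1 + lam ^ n) with hF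
  set G : ℕ → ℝ := fun i => f 0 * (lam ^ i + lam ^ (n - i)) + D * (lam ^ i - lam⁻¹ ^ i) with hG
  have hFrec : ∀ i, 0 < i → i < n → ρ * F i = F (i - 1) + F (i + 1) := by
    intro i h1 h2
    have := hrec i h1 h2
    simp only [hF]
    linear_combination (1 + lam ^ n) * this
  have hGrec : ∀ i, 0 < i → i < n → ρ * G i = G (i - 1) + G (i + 1) := by
    intro i h1 h2
    obtain ⟨i', rfl⟩ : ∃ i', i = i' + 1 := ⟨i - 1, by omega⟩
    obtain ⟨t, rfl⟩ : ∃ t, n = i' + 1 + t + 1 := ⟨n - i' - 2, by omega⟩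
    simp only [hG]
    rw [show i' + 1 + t + 1 - (i' + 1) = t + 1 by omega,
      show i' + 1 - 1 = i' by omega,
      show i' + 1 + t + 1 - i' = t + 2 by omega,
      show i' + 1 + t + 1 - (i' + 1 + 1) = t by omega, hρ]
    have hinv : lam * lam⁻¹ = 1 := mul_inv_cancel₀ hlamne
    field_simp
    clear_value D
    linear_combination (D * lam⁻¹ * lam⁻¹ ^ i' - lam * D * lam⁻¹ ^ i') * hinv
  have hG0 : F 0 = G 0 := by
    simp only [hF, hG, pow_zero, Nat.sub_zero]
    ring
  have hG1 : F 1 = G 1 := by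
    have hDmul : D * (lam - lam⁻¹) = f 1 * (1 + lam ^ n) - f 0 * (lam + lam ^ (n - 1)) := by
      rw [hD, div_mul_cancel₀ _ (ne_of_gt hsubpos)]
    simp only [hF, hG, pow_one]
    linarith [hDmul]
  have hFG := rec_unique ρ n F G hFrec hGrec hG0 hG1
  have hDz : D = 0 := by
    have hn' := hFG n le_rfl
    simp only [hF, hG, Nat.sub_self, pow_zero] at hn'
    rw [hend] at hn'
    have hfac : D * (lam ^ n - lam⁻¹ ^ n) = 0 := by linarith
    have h1 : lam⁻¹ ^ n < 1 := pow_lt_one₀ (le_of_lt hinv0) hinvlt (by omega)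
    have h2 : 1 < lam ^ n := one_lt_pow₀ hlam (by omega)
    have : lam ^ n - lam⁻¹ ^ n ≠ 0 := by linarith
    exact (mul_eq_zero.1 hfac).resolve_right this
  intro i hi
  have := hFG i hi
  simp only [hF, hG, hDz, zero_mul, add_zero] at this
  exact this

/-- The discrete Wronskian of `y` against its reversal is constant along the path. -/
lemma wronskian_const (ρ : ℝ) (p : ℕ) (y : ℕ → ℝ)
    (hrec : ∀ k, 0 < k → k < p → ρ * y k = y (k - 1) + y (k + 1)) :
    ∀ k, k ≤ p - 1 → y k * y (p - 1 - k) - y (k + 1) * y (p - k)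
      = y 0 * y (p - 1) - y 1 * y p := by
  intro k
  induction k with
  | zero => intro _; simp
  | succ k ih =>
    intro hk
    rw [← ih (by omega)]
    obtain ⟨c, rfl⟩ : ∃ c, p = k + c + 2 := ⟨p - k - 2, by omega⟩
    have h1 := hrec (k + 1) (by omega) (by omega)
    have h2 := hrec (c + 1) (by omega) (by omega)
    simp only [Nat.add_sub_cancel] at h1 h2
    rw [show k + c + 2 - 1 - (k + 1) = c by omega,
      show k + c + 2 - (k + 1) = c + 1 by omega,
      show k + c + 2 - 1 - k = c + 1 by omega,
      show k + c + 2 - k = c + 2 by omega]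
    linear_combination y (c + 1) * h1 - y (k + 1) * h2

/-- Downward propagation of strict negativity for a solution of the recurrence. -/
lemma descend_lt (ρ : ℝ) (hρ : 2 < ρ) (p : ℕ) (d : ℕ → ℝ)
    (hrec : ∀ k, 0 < k → k < p → ρ * d k = d (k - 1) + d (k + 1))
    (b : ℕ) (hb : b + 1 ≤ p) (hbase : d b < 0) (hbase2 : d b ≤ d (b + 1)) : d 0 < 0 := by
  have key : ∀ t, t ≤ b → d (b - t) < 0 ∧ d (b - t) ≤ d (b - t + 1) := by
    intro t
    induction t with
    | zero => intro _; simpa using ⟨hbase, hbase2⟩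
    | succ t ih =>
      intro ht
      obtain ⟨h1, h2⟩ := ih (by omega)
      set k := b - (t + 1) with hkdef
      have hk1 : k + 1 = b - t := by omega
      have e := hrec (k + 1) (by omega) (by omega)
      simp only [Nat.add_sub_cancel] at e
      -- e : ρ * d (k+1) = d k + d (k+2)
      rw [hk1] at e
      have h2' : d (b - t + 1) = d (k + 2) := by rw [show k + 2 = b - t + 1 by omega]
      rw [h2'] at h2
      rw [← hk1] at e h1 h2
      have hlt : ρ * d (k + 1) < 2 * d (k + 1) := by nlinarith
      constructor
      · show d k < 0
        nlinarith
      · show d k ≤ d (k + 1)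
        nlinarith
  have := (key b le_rfl).1
  simpa using this

/-- Downward propagation of vanishing for a solution of the recurrence. -/
lemma descend_eq (ρ : ℝ) (p : ℕ) (d : ℕ → ℝ)
    (hrec : ∀ k, 0 < k → k < p → ρ * d k = d (k - 1) + d (k + 1))
    (b : ℕ) (hb : b + 1 ≤ p) (hbase : d b = 0) (hbase2 : d (b + 1) = 0) : d 0 = 0 := by
  have key : ∀ t, t ≤ b → d (b - t) = 0 ∧ d (b - t + 1) = 0 := by
    intro t
    induction t with
    | zero => intro _; simpa using ⟨hbase, hbase2⟩
    | succ t ih =>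
      intro ht
      obtain ⟨h1, h2⟩ := ih (by omega)
      set k := b - (t + 1) with hkdef
      have e := hrec (k + 1) (by omega) (by omega)
      simp only [Nat.add_sub_cancel] at e
      have hb1 : d (k + 1) = 0 := by rw [show k + 1 = b - t by omega]; exact h1
      have hb2 : d (k + 1 + 1) = 0 := by rw [show k + 1 + 1 = b - t + 1 by omega]; exact h2
      rw [hb1, mul_zero] at e
      exact ⟨by linarith, hb1⟩
  have := (key b le_rfl).1
  simpa using this

/-- Endpoint comparison along the path: strict case. -/
lemma path_lt (ρ : ℝ) (hρ : 2 < ρ) (p : ℕ) (hp : 1 ≤ p) (y : ℕ → ℝ)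
    (hpos : ∀ k, 0 < y k)
    (hrec : ∀ k, 0 < k → k < p → ρ * y k = y (k - 1) + y (k + 1))
    (hW : y 0 * y (p - 1) - y 1 * y p < 0) : y 0 < y p := by
  set d : ℕ → ℝ := fun k => y k - y (p - k) with hd
  have drec : ∀ k, 0 < k → k < p → ρ * d k = d (k - 1) + d (k + 1) := by
    intro k h1 h2
    obtain ⟨c, rfl⟩ : ∃ c, p = k + c + 1 := ⟨p - k - 1, by omega⟩
    have e1 := hrec k h1 h2
    have e2 := hrec (c + 1) (by omega) (by omega)
    simp only [Nat.add_sub_cancel] at e2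
    simp only [hd]
    rw [show k + c + 1 - k = c + 1 by omega, show k + c + 1 - (k - 1) = c + 2 by omega,
      show k + c + 1 - (k + 1) = c by omega]
    linear_combination e1 - e2
  have W := wronskian_const ρ p y hrec
  rcases Nat.even_or_odd p with ⟨h, hh⟩ | ⟨h, hh⟩
  · -- p = h + h, even
    have hh1 : 1 ≤ h := by omega
    have hW2 := W (h - 1) (by omega)
    rw [show p - 1 - (h - 1) = h by omega, show p - (h - 1) = h + 1 by omega,
      show h - 1 + 1 = h by omega] at hW2
    have hbase : d (h - 1) < 0 := by
      simp only [hd]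
      rw [show p - (h - 1) = h + 1 by omega]
      nlinarith [hW2, hW, hpos h]
    have hbase2 : d (h - 1) ≤ d (h - 1 + 1) := by
      have hz : d (h - 1 + 1) = 0 := by
        simp only [hd]
        rw [show h - 1 + 1 = h by omega, show p - h = h by omega]
        ring
      linarith
    have h0 := descend_lt ρ hρ p d drec (h - 1) (by omega) hbase hbase2
    simp only [hd, Nat.sub_zero] at h0
    linarith
  · -- p = 2h + 1, odd
    have hW2 := W h (by omega)
    rw [show p - 1 - h = h by omega, show p - h = h + 1 by omega] at hW2
    have hbase : d h < 0 := by
      simp only [hd]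
      rw [show p - h = h + 1 by omega]
      nlinarith [hW2, hW, hpos h, hpos (h + 1)]
    have hbase2 : d h ≤ d (h + 1) := by
      have hz : d (h + 1) = - d h := by
        simp only [hd]
        rw [show p - (h + 1) = h by omega, show p - h = h + 1 by omega]
        ring
      linarith
    have h0 := descend_lt ρ hρ p d drec h (by omega) hbase hbase2
    simp only [hd, Nat.sub_zero] at h0
    linarith

/-- Endpoint comparison along the path: equality case. -/
lemma path_eq (ρ : ℝ) (hρ : 2 < ρ) (p : ℕ) (hp : 1 ≤ p) (y : ℕ → ℝ)
    (hpos : ∀ k, 0 < y k)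
    (hrec : ∀ k, 0 < k → k < p → ρ * y k = y (k - 1) + y (k + 1))
    (hW : y 0 * y (p - 1) - y 1 * y p = 0) : y 0 = y p := by
  set d : ℕ → ℝ := fun k => y k - y (p - k) with hd
  have drec : ∀ k, 0 < k → k < p → ρ * d k = d (k - 1) + d (k + 1) := by
    intro k h1 h2
    obtain ⟨c, rfl⟩ : ∃ c, p = k + c + 1 := ⟨p - k - 1, by omega⟩
    have e1 := hrec k h1 h2
    have e2 := hrec (c + 1) (by omega) (by omega)
    simp only [Nat.add_sub_cancel] at e2
    simp only [hd]
    rw [show k + c + 1 - k = c + 1 by omega, show k + c + 1 - (k - 1) = c + 2 by omega,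
      show k + c + 1 - (k + 1) = c by omega]
    linear_combination e1 - e2
  have W := wronskian_const ρ p y hrec
  rcases Nat.even_or_odd p with ⟨h, hh⟩ | ⟨h, hh⟩
  · -- even
    have hh1 : 1 ≤ h := by omega
    have hW2 := W (h - 1) (by omega)
    rw [show p - 1 - (h - 1) = h by omega, show p - (h - 1) = h + 1 by omega,
      show h - 1 + 1 = h by omega, hW] at hW2
    have hbase : d (h - 1) = 0 := by
      simp only [hd]
      rw [show p - (h - 1) = h + 1 by omega]
      have hf : y h * (y (h - 1) - y (h + 1)) = 0 := by linear_combination hW2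
      rcases mul_eq_zero.1 hf with hc | hc
      · exact absurd hc (ne_of_gt (hpos h))
      · linarith
    have hbase2 : d (h - 1 + 1) = 0 := by
      simp only [hd]
      rw [show h - 1 + 1 = h by omega, show p - h = h by omega]
      ring
    have h0 := descend_eq ρ p d drec (h - 1) (by omega) hbase hbase2
    simp only [hd, Nat.sub_zero] at h0
    linarith
  · -- odd
    have hW2 := W h (by omega)
    rw [show p - 1 - h = h by omega, show p - h = h + 1 by omega, hW] at hW2
    have hbase : d h = 0 := by
      simp only [hd]
      rw [show p - h = h + 1 by omega]
      have hf : (y h - y (h + 1)) * (y h + y (h + 1)) = 0 := by linear_combination hW2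
      rcases mul_eq_zero.1 hf with hc | hc
      · exact hc
      · nlinarith [hpos h, hpos (h + 1)]
    have hbase2 : d (h + 1) = 0 := by
      have hz : d (h + 1) = - d h := by
        simp only [hd]
        rw [show p - (h + 1) = h by omega, show p - h = h + 1 by omega]
        ring
      rw [hz, hbase]; ring
    have h0 := descend_eq ρ p d drec h (by omega) hbase hbase2
    simp only [hd, Nat.sub_zero] at h0
    linarith

/-- Strict monotonicity of the cycle boundary coefficient. -/
lemma Cmono (lam : ℝ) (hlam : 1 < lam) {m q : ℕ} (hq : 3 ≤ q) (hmq : q < m) :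
    (lam + lam ^ (m - 1)) * (1 + lam ^ q) < (lam + lam ^ (q - 1)) * (1 + lam ^ m) := by
  obtain ⟨s, rfl⟩ : ∃ s, q = s + 3 := ⟨q - 3, by omega⟩
  obtain ⟨t, rfl⟩ : ∃ t, m = (s + 3) + (t + 1) := ⟨m - (s + 3) - 1, by omega⟩
  have key : (lam + lam ^ (s + 3 - 1)) * (1 + lam ^ (s + 3 + (t + 1)))
      - (lam + lam ^ (s + 3 + (t + 1) - 1)) * (1 + lam ^ (s + 3))
      = lam ^ (s + 2) * (lam ^ (t + 1) - 1) * (lam ^ 2 - 1) := by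
    rw [show s + 3 - 1 = s + 2 by omega, show s + 3 + (t + 1) - 1 = s + t + 3 by omega,
      show s + 3 + (t + 1) = s + t + 4 by omega]
    ring
  have h1 : 1 < lam ^ (t + 1) := one_lt_pow₀ hlam (by omega)
  have h2 : 1 < lam ^ 2 := one_lt_pow₀ hlam (by omega)
  have h3 : (0:ℝ) < lam ^ (s + 2) := by positivity
  nlinarith [key, mul_pos (mul_pos h3 (show (0:ℝ) < lam ^ (t + 1) - 1 by linarith))
    (show (0:ℝ) < lam ^ 2 - 1 by linarith)]
/-- Let `m, q ≥ 3`, `p ≥ 1`, and let `x` be the Perron vector of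
`B(m,p,q)`: the positive unit eigenvector of the adjacency matrix corresponding to the
spectral radius.  Let `u_0 = Sum.inl 0` and `v_0 = Sum.inr (Sum.inr 0)` be the two
vertices of degree `3`, on the `m`-cycle and the `q`-cycle respectively.  If `m > q`
then `xature{u_0} < x_{v_0}`, and if `m = q` then `x_{u_0} = x_{v_0}`. -/
theorem perron_BGraph (m p q : ℕ) (hm : 3 ≤ m) (hq : 3 ≤ q) (hp : 1 ≤ p)
    (x : Fin m ⊕ Fin (p - 1) ⊕ Fin q → ℝ)
    (hpos : ∀ v, 0 < x v)
    (hunit : ∑ v, (x v) ^ 2 = 1)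
    (heig : Matrix.mulVec (adjMat (BGraph m p q)) x = specRad (BGraph m p q) • x) :
    (q < m → x (Sum.inl ⟨0, by omega⟩) < x (Sum.inr (Sum.inr ⟨0, by omega⟩))) ∧
    (m = q → x (Sum.inl ⟨0, by omega⟩) = x (Sum.inr (Sum.inr ⟨0, by omega⟩))) := by
  set ρ := specRad (BGraph m p q) with hρdef
  have hx : ∀ v, (∑ w, if (BGraph m p q).Adj v w then x w else 0) = ρ * x v := by
    intro v
    have h := congrFun heig v
    rw [show adjMat (BGraph m p q) = (BGraph m p q).adjMatrix ℝ from rfl] at h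
    rw [SimpleGraph.adjMatrix_mulVec_apply, SimpleGraph.neighborFinset_eq_filter,
      Finset.sum_filter] at h
    simpa using h
  have hρ2 : 2 < ρ := rho_gt_two hm hq hp hpos hx
  set s : ℝ := Real.sqrt (ρ ^ 2 - 4) with hs
  have hs0 : 0 ≤ s := Real.sqrt_nonneg _
  have hs2 : s ^ 2 = ρ ^ 2 - 4 := Real.sq_sqrt (by nlinarith)
  set lam : ℝ := (ρ + s) / 2 with hlamdef
  have hlam : 1 < lam := by rw [hlamdef]; linarith
  have hmul : lam * (ρ - lam) = 1 := by
    rw [hlamdef]; linear_combination (-(1:ℝ)/4) * hs2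
  have hinv : lam⁻¹ = ρ - lam := inv_eq_of_mul_eq_one_right hmul
  have hρlam : ρ = lam + lam⁻¹ := by rw [hinv]; ring
  -- closed form on the two cycles
  have haM : aseq x m = aseq x 0 := by
    rw [show aseq x m = x (Sum.inl ⟨m % m, Nat.mod_lt _ (by omega)⟩) from dif_pos _,
      show aseq x 0 = x (Sum.inl ⟨0 % m, Nat.mod_lt _ (by omega)⟩) from dif_pos _]
    congr 1; simp [Fin.ext_iff]
  have hbQ : bseq x q = bseq x 0 := by
    rw [show bseq x q = x (Sum.inr (Sum.inr ⟨q % q, Nat.mod_lt _ (by omega)⟩)) from dif_pos _,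
      show bseq x 0 = x (Sum.inr (Sum.inr ⟨0 % q, Nat.mod_lt _ (by omega)⟩)) from dif_pos _]
    congr 1; simp [Fin.ext_iff]
  have hA := segment_form ρ lam hlam hρlam m (by omega) (aseq x) (F1 hm hx) haM
  have hB := segment_form ρ lam hlam hρlam q (by omega) (bseq x) (F3 hq hx) hbQ
  have hA1 := hA 1 (by omega)
  have hAm := hA (m - 1) (by omega)
  rw [show m - (m - 1) = 1 by omega] at hAm
  rw [pow_one] at hA1 hAm
  have hB1 := hB 1 (by omega)
  have hBq := hB (q - 1) (by omega)
  rw [show q - (q - 1) = 1 by omega] at hBq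
  rw [pow_one] at hB1 hBq
  have hF2 := F2 hm hq hp hx
  have hF4 := F4 hm hq hp hx
  have hMpos : (0:ℝ) < 1 + lam ^ m := by positivity
  have hQpos : (0:ℝ) < 1 + lam ^ q := by positivity
  have hy1 : yseq x 1 * (1 + lam ^ m)
      = aseq x 0 * (ρ * (1 + lam ^ m) - 2 * (lam + lam ^ (m - 1))) := by
    linear_combination (-(1 + lam ^ m)) * hF2 - hA1 - hAm
  have hyp1 : yseq x (p - 1) * (1 + lam ^ q)
      = bseq x 0 * (ρ * (1 + lam ^ q) - 2 * (lam + lam ^ (q - 1))) := by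
    linear_combination (-(1 + lam ^ q)) * hF4 - hB1 - hBq
  have hy0 : yseq x 0 = aseq x 0 := by simp [yseq]
  have hypp : yseq x p = bseq x 0 := by simp [yseq, show p ≠ 0 by omega]
  have hy_pos : ∀ k, 0 < yseq x k := ypos hm hq hpos
  have ha0 : 0 < aseq x 0 := apos hm hpos 0
  have hb0 : 0 < bseq x 0 := bpos hq hpos 0
  have expand : (yseq x 0 * yseq x (p - 1) - yseq x 1 * yseq x p)
        * ((1 + lam ^ m) * (1 + lam ^ q))
      = aseq x 0 * bseq x 0 * 2
        * ((lam + lam ^ (m - 1)) * (1 + lam ^ q) - (lam + lam ^ (q - 1)) * (1 + lam ^ m)) := by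
    rw [hy0, hypp]
    linear_combination (aseq x 0 * (1 + lam ^ m)) * hyp1 - (bseq x 0 * (1 + lam ^ q)) * hy1
  have e1 : yseq x 0 = x (Sum.inl ⟨0, by omega⟩) := by
    rw [hy0]
    rw [show aseq x 0 = x (Sum.inl ⟨0 % m, Nat.mod_lt _ (by omega)⟩) from dif_pos _]
    congr 1
  have e2 : yseq x p = x (Sum.inr (Sum.inr ⟨0, by omega⟩)) := by
    rw [hypp]
    rw [show bseq x 0 = x (Sum.inr (Sum.inr ⟨0 % q, Nat.mod_lt _ (by omega)⟩)) from dif_pos _]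
    congr 1
  constructor
  · intro hlt
    have hC := Cmono lam hlam hq hlt
    have hprod : (yseq x 0 * yseq x (p - 1) - yseq x 1 * yseq x p)
        * ((1 + lam ^ m) * (1 + lam ^ q)) < 0 := by
      rw [expand]
      nlinarith [mul_pos ha0 hb0, hC]
    have hW : yseq x 0 * yseq x (p - 1) - yseq x 1 * yseq x p < 0 := by
      by_contra hcon
      push_neg at hcon
      exact absurd hprod (not_lt.2 (mul_nonneg hcon (mul_pos hMpos hQpos).le))
    have hfin := path_lt ρ hρ2 p hp (yseq x) hy_pos (F5 hm hq hx) hW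
    rw [e1, e2] at hfin
    exact hfin
  · intro hmq
    subst hmq
    have hprod : (yseq x 0 * yseq x (p - 1) - yseq x 1 * yseq x p)
        * ((1 + lam ^ m) * (1 + lam ^ m)) = 0 := by
      rw [expand]; ring
    have hW : yseq x 0 * yseq x (p - 1) - yseq x 1 * yseq x p = 0 := by
      rcases mul_eq_zero.1 hprod with hc | hc
      · exact hc
      · exact absurd hc (ne_of_gt (mul_pos hMpos hMpos))
    have hfin := path_eq ρ hρ2 p hp (yseq x) hy_pos (F5 hm hm hx) hW
    rw [e1, e2] at hfin
    exact hfin
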